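/- With the notation of the previous statement (ρ a density matrix on H = ⊗_i ℂ^{d_i}, ρ̃_u = (⊗U_i) ρ* (⊗U_i†), |𝒮_u⟩ = ⊗_i (I⊗U_i)|S_i⟩, and 𝒫_u^{(i ī)} = |S_{u_i}⟩⟨S_{u_i}|), one has tr(ρ ρ̃_u) = (∏_{i=1}^n d_i) · tr[(⊗_{i=1}^n 𝒫_u^{(i ī)}) (ρ ⊗ ρ)]. -/

import Mathlib

open ComplexOrder Matrix Kronecker BigOperators

/-- The tensor product `U₁ ⊗ ⋯ ⊗ Uₙ` of local operators. -/
noncomputable def bigTensor (n : ℕ) (d : Fin n → ℕ)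
    (U : (i : Fin n) → Matrix (Fin (d i)) (Fin (d i)) ℂ) :
    Matrix ((i : Fin n) → Fin (d i)) ((i : Fin n) → Fin (d i)) ℂ :=
  Matrix.of fun x y => ∏ i, U i (x i) (y i)

/-- `|𝒮ᵤ⟩ = ⊗ᵢ (I ⊗ Uᵢ)|Sᵢ⟩`. -/
noncomputable def mesU (n : ℕ) (d : Fin n → ℕ)
    (U : (i : Fin n) → Matrix (Fin (d i)) (Fin (d i)) ℂ) :
    ((i : Fin n) → Fin (d i)) × ((i : Fin n) → Fin (d i)) → ℂ :=
  fun p => ∏ i, U i (p.2 i) (p.1 i) * (((Real.sqrt (d i))⁻¹ : ℝ) : ℂ)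

/-- The antilinearly transformed state `ρ̃ᵤ = (⊗Uᵢ) ρ* (⊗Uᵢ†)`. -/
noncomputable def rhoTildeU (n : ℕ) (d : Fin n → ℕ)
    (U : (i : Fin n) → Matrix (Fin (d i)) (Fin (d i)) ℂ)
    (ρ : Matrix ((i : Fin n) → Fin (d i)) ((i : Fin n) → Fin (d i)) ℂ) :
    Matrix ((i : Fin n) → Fin (d i)) ((i : Fin n) → Fin (d i)) ℂ :=
  bigTensor n d U * ρ.map (starRingEnd ℂ) * (bigTensor n d U)ᴴ

/-- `tr(ρ ρ̃ᵤ) = (∏ᵢ dᵢ) · tr[(⊗ᵢ 𝒫ᵤ^{(i ī)})(ρ ⊗ ρ)]`, where the reordered tensor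
product of the projectors `𝒫ᵤ^{(i ī)} = |S_{uᵢ}⟩⟨S_{uᵢ}|` is `|𝒮ᵤ⟩⟨𝒮ᵤ|`. -/
theorem stmt5 (n : ℕ) (d : Fin n → ℕ) (hd : ∀ i, 0 < d i)
    (ρ : Matrix ((i : Fin n) → Fin (d i)) ((i : Fin n) → Fin (d i)) ℂ)
    (hρ : ρ.PosSemidef) (htr : ρ.trace = 1)
    (U : (i : Fin n) → Matrix (Fin (d i)) (Fin (d i)) ℂ)
    (hU : ∀ i, U i ∈ Matrix.unitaryGroup (Fin (d i)) ℂ) :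
    (ρ * rhoTildeU n d U ρ).trace
      = (∏ i, (d i : ℂ)) *
        (vecMulVec (mesU n d U) (star (mesU n d U)) * (ρ ⊗ₖ ρ)).trace := by
  have hherm : ∀ a b, (starRingEnd ℂ) (ρ a b) = ρ b a := by
    intro a b
    conv_rhs => rw [← hρ.1]
    rfl
  have hmes : ∀ p q : ((i : Fin n) → Fin (d i)) × ((i : Fin n) → Fin (d i)),
      mesU n d U p * star (mesU n d U q)
        = (∏ i, (d i : ℂ))⁻¹ *
          ((∏ i, U i (p.2 i) (p.1 i)) * (∏ i, star (U i (q.2 i) (q.1 i)))) := by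
    intro p q
    simp only [mesU, star_prod, star_mul', Complex.star_def, Complex.conj_ofReal,
      Finset.prod_mul_distrib]
    rw [← Finset.prod_inv_distrib]
    have h2 : ∀ i : Fin n, (((Real.sqrt (d i))⁻¹ : ℝ) : ℂ) * (((Real.sqrt (d i))⁻¹ : ℝ) : ℂ)
        = ((d i : ℂ))⁻¹ := by
      intro i
      rw [← Complex.ofReal_mul, ← mul_inv, Real.mul_self_sqrt (by positivity)]
      push_cast
      ring
    calc (∏ i, U i (p.2 i) (p.1 i)) * (∏ i, (((Real.sqrt (d i))⁻¹ : ℝ) : ℂ)) *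
          ((∏ i, (starRingEnd ℂ) (U i (q.2 i) (q.1 i))) * (∏ i, (((Real.sqrt (d i))⁻¹ : ℝ) : ℂ)))
        = (∏ i, (((Real.sqrt (d i))⁻¹ : ℝ) : ℂ) * (((Real.sqrt (d i))⁻¹ : ℝ) : ℂ)) *
          ((∏ i, U i (p.2 i) (p.1 i)) * ∏ i, (starRingEnd ℂ) (U i (q.2 i) (q.1 i))) := by
          rw [Finset.prod_mul_distrib]; ring
      _ = _ := by rw [Finset.prod_congr rfl fun i _ => h2 i, Finset.prod_inv_distrib]
  have hdne : (∏ i, (d i : ℂ)) ≠ 0 :=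
    Finset.prod_ne_zero_iff.mpr fun i _ => Nat.cast_ne_zero.mpr (hd i).ne'
  have key : ∀ F : ((i : Fin n) → Fin (d i)) → ((i : Fin n) → Fin (d i)) →
      ((i : Fin n) → Fin (d i)) → ((i : Fin n) → Fin (d i)) → ℂ,
      (∑ a, ∑ b, ∑ y, ∑ x, F a b y x) = ∑ x, ∑ b, ∑ y, ∑ a, F a b y x := by
    intro F
    have l : (∑ q : ((i : Fin n) → Fin (d i)) × ((i : Fin n) → Fin (d i)) ×
          ((i : Fin n) → Fin (d i)) × ((i : Fin n) → Fin (d i)),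
        F q.1 q.2.1 q.2.2.1 q.2.2.2) = ∑ a, ∑ b, ∑ y, ∑ x, F a b y x := by
      simp only [Fintype.sum_prod_type]
    have r : (∑ q : ((i : Fin n) → Fin (d i)) × ((i : Fin n) → Fin (d i)) ×
          ((i : Fin n) → Fin (d i)) × ((i : Fin n) → Fin (d i)),
        F q.2.2.2 q.2.1 q.2.2.1 q.1) = ∑ x, ∑ b, ∑ y, ∑ a, F a b y x := by
      simp only [Fintype.sum_prod_type]
    rw [← l, ← r]
    exact Fintype.sum_equiv ⟨fun q => (q.2.2.2, q.2.1, q.2.2.1, q.1),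
      fun q => (q.2.2.2, q.2.1, q.2.2.1, q.1), fun q => rfl, fun q => rfl⟩ _ _ (fun q => rfl)
  simp only [rhoTildeU, bigTensor, Matrix.trace, Matrix.diag, Matrix.mul_apply,
    Matrix.map_apply, Matrix.conjTranspose_apply, Matrix.vecMulVec_apply,
    Matrix.kroneckerMap_apply, Matrix.of_apply, Pi.star_apply, hherm, hmes,
    Fintype.sum_prod_type]
  simp only [Finset.mul_sum, Finset.sum_mul]
  rw [key (fun a b y x => ρ a b * ((∏ i, U i (b i) (x i)) * ρ y x * star (∏ i, U i (a i) (y i))))]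
  refine Finset.sum_congr rfl fun x _ => Finset.sum_congr rfl fun b _ =>
    Finset.sum_congr rfl fun y _ => Finset.sum_congr rfl fun a _ => ?_
  rw [star_prod]
  field_simp
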